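/- The committal rates of stochastic NPG and GNPG are infinite: fix any a ∈ [K], η > 0 and θ̃_1 ∈ ℝ^K. (i) For the fixed-sampling NPG sequence θ̃_{t+1} := θ̃_t + η·r̂_a (where r̂_a is the IS estimate at θ̃_t with sampled action a), for every α ≥ 0 one has t^α·(1 − π_{θ̃_t}(a)) → 0 as t → ∞; hence κ(NPG, a) = ∞. (ii) For the fixed-sampling GNPG sequence θ̃_{t+1} := θ̃_t + η·g_a(θ̃_t)/‖g_a(θ̃_t)‖₂, for every α ≥ 0 one has t^α·(1 − π_{θ̃_t}(a)) → 0 as t → ∞; hence κ(GNPG, a) = ∞. -/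
import Mathlib


open Finset Real Filter

/-- Softmax policy: `π_θ(a) = exp(θ(a)) / Σ_{a'} exp(θ(a'))`. -/
noncomputable def softmax {K : ℕ} (θ : Fin K → ℝ) (a : Fin K) : ℝ :=
  Real.exp (θ a) / ∑ a', Real.exp (θ a')

/-- On-policy importance-sampling (IS) reward estimate for sampled action `a`:
`r̂_a(a') = 1{a' = a}·r(a')/π_θ(a')`. -/
noncomputable def isEst {K : ℕ} (r : Fin K → ℝ) (a : Fin K) (θ : Fin K → ℝ)
    (a' : Fin K) : ℝ :=
  if a' = a then r a' / softmax θ a' else 0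

/-- On-policy IS stochastic softmax policy gradient for sampled action `a`:
`g_a(θ)(i) = 1{i = a}·r(a) − π_θ(i)·r(a)`. -/
noncomputable def stochPG {K : ℕ} (r : Fin K → ℝ) (a : Fin K) (θ : Fin K → ℝ)
    (i : Fin K) : ℝ :=
  (if i = a then r a else 0) - softmax θ i * r a

/-- Euclidean norm of the stochastic softmax policy gradient. -/
noncomputable def stochPGNorm {K : ℕ} (r : Fin K → ℝ) (a : Fin K) (θ : Fin K → ℝ) : ℝ :=
  Real.sqrt (∑ i, stochPG r a θ i ^ 2)

lemma sum_exp_pos {K : ℕ} (θ : Fin K → ℝ) (a : Fin K) :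
    0 < ∑ a', Real.exp (θ a') :=
  Finset.sum_pos (fun _ _ => Real.exp_pos _) ⟨a, Finset.mem_univ a⟩

lemma softmax_pos {K : ℕ} (θ : Fin K → ℝ) (a : Fin K) : 0 < softmax θ a :=
  div_pos (Real.exp_pos _) (sum_exp_pos θ a)

lemma softmax_le_one {K : ℕ} (θ : Fin K → ℝ) (a : Fin K) : softmax θ a ≤ 1 := by
  rw [softmax, div_le_one (sum_exp_pos θ a)]
  exact Finset.single_le_sum (fun i _ => (Real.exp_pos _).le) (Finset.mem_univ a)

lemma one_sub_softmax {K : ℕ} (θ : Fin K → ℝ) (a : Fin K) :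
    1 - softmax θ a = (∑ i ∈ Finset.univ.erase a, Real.exp (θ i)) / ∑ a', Real.exp (θ a') := by
  have hS := sum_exp_pos θ a
  rw [softmax, Finset.sum_erase_eq_sub (Finset.mem_univ a)]
  field_simp

lemma softmax_lt_one {K : ℕ} (hK : 2 ≤ K) (θ : Fin K → ℝ) (a : Fin K) :
    softmax θ a < 1 := by
  haveI : Nontrivial (Fin K) := Fin.nontrivial_iff_two_le.mpr hK
  obtain ⟨b, hb⟩ := exists_ne a
  have : 0 < ∑ i ∈ Finset.univ.erase a, Real.exp (θ i) :=
    Finset.sum_pos' (fun i _ => (Real.exp_pos _).le)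
      ⟨b, Finset.mem_erase.mpr ⟨hb, Finset.mem_univ b⟩, Real.exp_pos _⟩
  have := div_pos this (sum_exp_pos θ a)
  rw [← one_sub_softmax] at this
  linarith

lemma sum_softmax_erase {K : ℕ} (θ : Fin K → ℝ) (a : Fin K) :
    ∑ i ∈ Finset.univ.erase a, softmax θ i = 1 - softmax θ a := by
  rw [one_sub_softmax, Finset.sum_div]
  rfl

/-- Main asymptotic lemma. -/
lemma main_aux {K : ℕ} (a : Fin K) (θ : ℕ → Fin K → ℝ) (c : ℝ) (hc : 0 < c)
    (ha : ∀ t : ℕ, θ 0 a + c * t ≤ θ t a)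
    (hi : ∀ t : ℕ, ∀ i : Fin K, i ≠ a → θ t i ≤ θ 0 i) :
    ∀ α : ℝ, 0 ≤ α →
      Tendsto (fun t : ℕ => (t : ℝ) ^ α * (1 - softmax (θ t) a)) atTop (nhds 0) := by
  intro α hα
  set C : ℝ := (∑ i ∈ Finset.univ.erase a, Real.exp (θ 0 i)) * Real.exp (-(θ 0 a)) with hC
  have hbound : ∀ t : ℕ, 1 - softmax (θ t) a ≤ C * Real.exp (-(c * t)) := by
    intro t
    rw [one_sub_softmax]
    have hS := sum_exp_pos (θ t) a
    have h1 : (∑ i ∈ Finset.univ.erase a, Real.exp (θ t i)) / ∑ a', Real.exp (θ t a')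
        ≤ (∑ i ∈ Finset.univ.erase a, Real.exp (θ 0 i)) / Real.exp (θ t a) := by
      apply div_le_div₀ (Finset.sum_nonneg fun i _ => (Real.exp_pos _).le)
      · exact Finset.sum_le_sum fun i hi' =>
          Real.exp_le_exp.mpr (hi t i (Finset.mem_erase.mp hi').1)
      · exact Real.exp_pos _
      · exact Finset.single_le_sum (fun i _ => (Real.exp_pos _).le) (Finset.mem_univ a)
    refine h1.trans ?_
    rw [div_eq_mul_inv, ← Real.exp_neg, hC, mul_assoc, ← Real.exp_add]
    apply mul_le_mul_of_nonneg_left _ (Finset.sum_nonneg fun i _ => (Real.exp_pos _).le)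
    rw [Real.exp_le_exp]
    have := ha t
    linarith
  have hlim : Tendsto (fun t : ℕ => C * ((t : ℝ) ^ α * Real.exp (-(c * t)))) atTop (nhds 0) := by
    have h := (tendsto_rpow_mul_exp_neg_mul_atTop_nhds_zero α c hc).comp
      tendsto_natCast_atTop_atTop (α := ℕ)
    have h2 := h.const_mul C
    simpa [Function.comp, neg_mul, mul_zero] using h2
  have hnn : ∀ t : ℕ, 0 ≤ (t : ℝ) ^ α * (1 - softmax (θ t) a) := fun t =>
    mul_nonneg (Real.rpow_nonneg (Nat.cast_nonneg t) α)
      (by linarith [softmax_le_one (θ t) a])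
  refine squeeze_zero hnn (fun t => ?_) hlim
  calc (t : ℝ) ^ α * (1 - softmax (θ t) a)
      ≤ (t : ℝ) ^ α * (C * Real.exp (-(c * t))) :=
        mul_le_mul_of_nonneg_left (hbound t) (Real.rpow_nonneg (Nat.cast_nonneg t) α)
    _ = C * ((t : ℝ) ^ α * Real.exp (-(c * t))) := by ring

/-- One GNPG step facts. -/
lemma gnpg_step {K : ℕ} (hK : 2 ≤ K) (r : Fin K → ℝ) (hr : ∀ a, 0 < r a ∧ r a ≤ 1)
    (a : Fin K) (θ : Fin K → ℝ) :
    1 / Real.sqrt 2 ≤ stochPG r a θ a / stochPGNorm r a θ ∧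
    ∀ i : Fin K, i ≠ a → stochPG r a θ i / stochPGNorm r a θ ≤ 0 := by
  have hra := (hr a).1
  have hp : 0 < 1 - softmax θ a := by linarith [softmax_lt_one hK θ a]
  have hga : stochPG r a θ a = r a * (1 - softmax θ a) := by
    simp [stochPG]; ring
  have hga_pos : 0 < stochPG r a θ a := hga ▸ mul_pos hra hp
  -- norm bounds
  have hsum_sq : ∑ i, stochPG r a θ i ^ 2 ≤ 2 * (r a * (1 - softmax θ a)) ^ 2 := by
    rw [← Finset.add_sum_erase _ _ (Finset.mem_univ a), hga]
    have h2 : ∑ i ∈ Finset.univ.erase a, stochPG r a θ i ^ 2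
        ≤ (r a * (1 - softmax θ a)) ^ 2 := by
      have heq : ∀ i ∈ Finset.univ.erase a,
          stochPG r a θ i ^ 2 = (softmax θ i * r a) ^ 2 := by
        intro i hi
        have : i ≠ a := (Finset.mem_erase.mp hi).1
        simp [stochPG, this]
      rw [Finset.sum_congr rfl heq]
      have := Finset.sum_sq_le_sq_sum_of_nonneg
        (s := Finset.univ.erase a) (f := fun i => softmax θ i * r a)
        (fun i _ => mul_nonneg (softmax_pos θ i).le hra.le)
      refine this.trans ?_
      rw [← Finset.sum_mul, sum_softmax_erase]
      apply le_of_eq; ring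
    linarith
  have hN_le : stochPGNorm r a θ ≤ Real.sqrt 2 * (r a * (1 - softmax θ a)) := by
    rw [stochPGNorm]
    calc Real.sqrt (∑ i, stochPG r a θ i ^ 2)
        ≤ Real.sqrt (2 * (r a * (1 - softmax θ a)) ^ 2) := Real.sqrt_le_sqrt hsum_sq
      _ = Real.sqrt 2 * (r a * (1 - softmax θ a)) := by
          rw [Real.sqrt_mul (by norm_num), Real.sqrt_sq (mul_pos hra hp).le]
  have hN_ge : stochPG r a θ a ≤ stochPGNorm r a θ := by
    rw [stochPGNorm]
    have h1 : stochPG r a θ a ^ 2 ≤ ∑ i, stochPG r a θ i ^ 2 :=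
      Finset.single_le_sum (f := fun i => stochPG r a θ i ^ 2)
        (fun i _ => sq_nonneg _) (Finset.mem_univ a)
    calc stochPG r a θ a = Real.sqrt (stochPG r a θ a ^ 2) :=
          (Real.sqrt_sq hga_pos.le).symm
      _ ≤ _ := Real.sqrt_le_sqrt h1
  have hN_pos : 0 < stochPGNorm r a θ := lt_of_lt_of_le hga_pos hN_ge
  have hs2 : (0:ℝ) < Real.sqrt 2 := Real.sqrt_pos.mpr (by norm_num)
  constructor
  · rw [div_le_div_iff₀ hs2 hN_pos, one_mul]
    calc stochPGNorm r a θ ≤ Real.sqrt 2 * (r a * (1 - softmax θ a)) := hN_le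
      _ = stochPG r a θ a * Real.sqrt 2 := by rw [hga]; ring
  · intro i hi
    apply div_nonpos_of_nonpos_of_nonneg _ hN_pos.le
    simp [stochPG, hi]
    exact mul_nonneg (softmax_pos θ i).le hra.le

/-- The committal rates of stochastic NPG and GNPG are infinite: for the
fixed-sampling sequences (action `a` sampled forever)
`θN_{t+1} = θN_t + η·r̂_a` and `θG_{t+1} = θG_t + η·g_a(θG_t)/‖g_a(θG_t)‖₂`,
for every `α ≥ 0` one has `t^α·(1 − π_{θ_t}(a)) → 0`; hence
`κ(NPG, a) = κ(GNPG, a) = ∞`. -/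
theorem committal_rate_npg_gnpg_infinite
    {K : ℕ} (hK : 2 ≤ K) (r : Fin K → ℝ)
    (hr : ∀ a, 0 < r a ∧ r a ≤ 1)
    (a : Fin K) (η : ℝ) (hη : 0 < η)
    (θN θG : ℕ → Fin K → ℝ)
    (hN : ∀ t, θN (t + 1) = fun a' => θN t a' + η * isEst r a (θN t) a')
    (hG : ∀ t, θG (t + 1) = fun i =>
      θG t i + η * (stochPG r a (θG t) i / stochPGNorm r a (θG t))) :
    (∀ α : ℝ, 0 ≤ α →
      Tendsto (fun t : ℕ => (t : ℝ) ^ α * (1 - softmax (θN t) a)) atTop (nhds 0)) ∧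
    (∀ α : ℝ, 0 ≤ α →
      Tendsto (fun t : ℕ => (t : ℝ) ^ α * (1 - softmax (θG t) a)) atTop (nhds 0)) := by
  have hra := (hr a).1
  constructor
  · -- NPG
    refine main_aux a θN (η * r a) (mul_pos hη hra) ?_ ?_
    · intro t
      induction t with
      | zero => simp
      | succ t ih =>
        have hstep : θN t a + η * r a ≤ θN (t + 1) a := by
          rw [hN t]
          simp only [isEst, if_pos rfl, eq_self_iff_true, if_true]
          have hπ := softmax_pos (θN t) a
          have hπ1 := softmax_le_one (θN t) a
          have : r a ≤ r a / softmax (θN t) a := by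
            rw [le_div_iff₀ hπ]
            nlinarith
          nlinarith
        push_cast
        linarith
    · intro t i hi
      induction t with
      | zero => exact le_refl _
      | succ t ih =>
        rw [hN t]
        simp only [isEst, if_neg hi]
        simpa using ih
  · -- GNPG
    refine main_aux a θG (η * (1 / Real.sqrt 2))
      (mul_pos hη (by positivity)) ?_ ?_
    · intro t
      induction t with
      | zero => simp
      | succ t ih =>
        have hstep := (gnpg_step hK r hr a (θG t)).1
        have : θG t a + η * (1 / Real.sqrt 2) ≤ θG (t + 1) a := by
          rw [hG t]
          have := mul_le_mul_of_nonneg_left hstep hη.le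
          linarith
        push_cast
        linarith
    · intro t i hi
      induction t with
      | zero => exact le_refl _
      | succ t ih =>
        rw [hG t]
        have hstep := (gnpg_step hK r hr a (θG t)).2 i hi
        have := mul_nonpos_of_nonneg_of_nonpos hη.le hstep
        simp only
        linarith
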